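/- Let C, C', P, Q be n×n real matrices. Assume (i) PCQ ≥ PC'Q entrywise; (ii) C' has an eigenvector Qu for a real eigenvalue λ', where u is a nonnegative column vector; (iii) C has a left eigenvector v^T P for a real eigenvalue λ, where v is a nonnegative row vector; and (iv) v^T P Q u > 0. Then λ ≥ λ'. Moreover, λ = λ' if and only if (PC'Q)_{ij} = (PCQ)_{ij} for all pairs (i,j) with v_i ≠ 0 and u_j ≠ 0. -/

import Mathlib

open Matrix Finset

theorem stmt_3 {n : ℕ} (C C' P Q : Matrix (Fin n) (Fin n) ℝ)
    (u v : Fin n → ℝ) (lam lam' : ℝ)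
    (h1 : ∀ i j, (P * C' * Q) i j ≤ (P * C * Q) i j)
    (hu : ∀ j, 0 ≤ u j)
    (h2 : C'.mulVec (Q.mulVec u) = lam' • Q.mulVec u)
    (hv : ∀ i, 0 ≤ v i)
    (h3 : Matrix.vecMul (Matrix.vecMul v P) C = lam • Matrix.vecMul v P)
    (h4 : 0 < dotProduct (Matrix.vecMul v P) (Q.mulVec u)) :
    lam' ≤ lam ∧
      (lam = lam' ↔ ∀ i j, v i ≠ 0 → u j ≠ 0 → (P * C' * Q) i j = (P * C * Q) i j) := by
  set s : ℝ := dotProduct (Matrix.vecMul v P) (Q.mulVec u) with hs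
  have key : ∀ (M : Matrix (Fin n) (Fin n) ℝ),
      dotProduct v (M.mulVec u) = ∑ p : Fin n × Fin n, v p.1 * (M p.1 p.2 * u p.2) := by
    intro M
    rw [Fintype.sum_prod_type]
    simp [dotProduct, Matrix.mulVec, Finset.mul_sum]
  have hC : dotProduct v ((P * C * Q).mulVec u) = lam * s := by
    rw [← Matrix.mulVec_mulVec, Matrix.dotProduct_mulVec, ← Matrix.vecMul_vecMul, h3,
      smul_dotProduct, smul_eq_mul]
  have hC' : dotProduct v ((P * C' * Q).mulVec u) = lam' * s := by
    have : (P * C' * Q).mulVec u = lam' • P.mulVec (Q.mulVec u) := by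
      rw [← Matrix.mulVec_mulVec, ← Matrix.mulVec_mulVec, h2, Matrix.mulVec_smul]
    rw [this, dotProduct_smul, smul_eq_mul, Matrix.dotProduct_mulVec]
  set f : Fin n × Fin n → ℝ := fun p =>
    v p.1 * ((P * C * Q) p.1 p.2 * u p.2) - v p.1 * ((P * C' * Q) p.1 p.2 * u p.2) with hf
  have hterm : ∀ p : Fin n × Fin n, 0 ≤ f p := by
    intro ⟨i, j⟩
    have := h1 i j
    simp only [hf]
    nlinarith [mul_nonneg (mul_nonneg (hv i) (hu j)) (sub_nonneg.mpr (h1 i j))]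
  have hD : (∑ p : Fin n × Fin n, f p) = (lam - lam') * s := by
    simp only [hf]
    rw [Finset.sum_sub_distrib, ← key, ← key, hC, hC', sub_mul]
  have hle : lam' ≤ lam := by
    have h0 : 0 ≤ (lam - lam') * s := hD ▸ Finset.sum_nonneg fun p _ => hterm p
    nlinarith
  refine ⟨hle, ?_, ?_⟩
  · intro heq i j hvi huj
    have hD0 : (∑ p : Fin n × Fin n, f p) = 0 := by rw [hD, heq]; ring
    have := (Finset.sum_eq_zero_iff_of_nonneg (fun p _ => hterm p)).mp hD0 ⟨i, j⟩
      (Finset.mem_univ _)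
    simp only [hf] at this
    have : v i * ((P * C * Q) i j * u j) = v i * ((P * C' * Q) i j * u j) := by linarith
    have h := mul_left_cancel₀ hvi this
    have h2 := mul_right_cancel₀ huj h
    exact h2.symm
  · intro h
    have hD0 : (∑ p : Fin n × Fin n, f p) = 0 := by
      apply Finset.sum_eq_zero
      intro ⟨i, j⟩ _
      simp only [hf]
      by_cases hvi : v i = 0
      · simp [hvi]
      by_cases huj : u j = 0
      · simp [huj]
      rw [h i j hvi huj]; ring
    have : (lam - lam') * s = 0 := by rw [← hD, hD0]
    have := mul_eq_zero.mp this
    rcases this with h' | h'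
    · linarith
    · exact absurd h' (ne_of_gt h4)
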